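/- Let Ω ⊂ ℝ^d be a bounded open set and let A(s) = (1+s) log(1+s) − s for s ≥ 0. Define the Luxemburg norm ‖f‖_{L_A(Ω)} := inf { t > 0 : ∫_Ω A(|f(x)|/t) dx ≤ 1 } and the quantity |f|_{L log L(Ω)} := ∫_Ω |f| log( e + |f| / ∫_Ω |f| dx ) dx. Then there exist constants k₁, k₂ > 0 such that for every f ∈ L¹_loc(Ω) with these quantities finite, k₁ ‖f‖_{L_A(Ω)} ≤ |f|_{L log L(Ω)} ≤ k₂ ‖f‖_{L_A(Ω)}. -/

import Mathlib

open MeasureTheory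
open scoped ENNReal Topology

noncomputable section

/-- Euclidean space ℝ^d. -/
abbrev Ed (d : ℕ) := EuclideanSpace ℝ (Fin d)

/-- The N-function A(s) = (1+s) log(1+s) − s. -/
def Afun (t : ℝ) : ℝ := (1 + t) * Real.log (1 + t) - t

/-- The set of admissible constants in the Luxemburg norm of f over Ω. -/
def luxSet (d : ℕ) (Ω : Set (Ed d)) (f : Ed d → ℝ) : Set ℝ :=
  {t : ℝ | 0 < t ∧ (∫ x in Ω, Afun (|f x| / t)) ≤ 1}

/-- The Luxemburg norm ‖f‖_{L_A(Ω)}. -/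
def luxNorm (d : ℕ) (Ω : Set (Ed d)) (f : Ed d → ℝ) : ℝ := sInf (luxSet d Ω f)

/-- The quantity |f|_{L log L(Ω)} = ∫_Ω |f| log(e + |f| / ∫_Ω |f|). -/
def llogl (d : ℕ) (Ω : Set (Ed d)) (f : Ed d → ℝ) : ℝ :=
  ∫ x in Ω, |f x| * Real.log (Real.exp 1 + |f x| / ∫ y in Ω, |f y|)

lemma log_one_add_le {s : ℝ} (hs : 0 ≤ s) : Real.log (1 + s) ≤ s := by
  have := Real.log_le_sub_one_of_pos (x := 1 + s) (by linarith)
  linarith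

lemma Afun_nonneg {s : ℝ} (hs : 0 ≤ s) : 0 ≤ Afun s := by
  unfold Afun
  have h1 : (0:ℝ) < 1 + s := by linarith
  have h2 := Real.log_le_sub_one_of_pos (x := (1 + s)⁻¹) (by positivity)
  rw [Real.log_inv] at h2
  have h3 : (1 + s) * (1 + s)⁻¹ = 1 := mul_inv_cancel₀ (ne_of_gt h1)
  nlinarith [mul_le_mul_of_nonneg_left h2 h1.le]

lemma Afun_le {s : ℝ} (hs : 0 ≤ s) : Afun s ≤ s * Real.log (1 + s) := by
  unfold Afun
  have := log_one_add_le hs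
  nlinarith

lemma le_Afun_add {s : ℝ} (hs : 0 ≤ s) : s ≤ Afun s + 8 := by
  rcases le_or_gt s 8 with h | h
  · have := Afun_nonneg hs; linarith
  · have h1 : (0:ℝ) < 1 + s := by linarith
    have he2 : Real.exp 2 ≤ 1 + s := by
      have h2 : Real.exp 1 < 2.7182818286 := Real.exp_one_lt_d9
      have : Real.exp 2 = Real.exp 1 * Real.exp 1 := by
        rw [← Real.exp_add]; norm_num
      nlinarith [Real.exp_pos 1]
    have hlog : (2:ℝ) ≤ Real.log (1 + s) := (Real.le_log_iff_exp_le h1).mpr he2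
    unfold Afun
    nlinarith

lemma log_e_add_nonneg {c : ℝ} (hc : 0 ≤ c) : 1 ≤ Real.log (Real.exp 1 + c) := by
  rw [Real.le_log_iff_exp_le (by positivity)]
  linarith

lemma fact4 {s : ℝ} (hs : 0 ≤ s) :
    s * Real.log (Real.exp 1 + s) ≤ 2 * Afun s + 2 * s + 2 := by
  have he : (1:ℝ) < Real.exp 1 := by
    have := Real.add_one_le_exp 1; linarith
  rcases le_or_gt s 1 with h | h
  · have hlog : Real.log (Real.exp 1 + s) ≤ 2 := by
      rw [Real.log_le_iff_le_exp (by positivity)]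
      have h2 : Real.exp 2 = Real.exp 1 * Real.exp 1 := by
        rw [← Real.exp_add]; norm_num
      have h3 : (2:ℝ) ≤ Real.exp 1 := by have := Real.add_one_le_exp 1; linarith
      nlinarith
    have hlp : (0:ℝ) ≤ Real.log (Real.exp 1 + s) := by
      have := log_e_add_nonneg hs; linarith
    have := Afun_nonneg hs
    nlinarith
  · have he3 : Real.exp 1 < 3 := by
      have := Real.exp_one_lt_d9; norm_num at this ⊢; linarith
    have hsq : Real.exp 1 + s ≤ (1 + s) ^ 2 := by nlinarith
    have hlog : Real.log (Real.exp 1 + s) ≤ 2 * Real.log (1 + s) := by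
      calc Real.log (Real.exp 1 + s) ≤ Real.log ((1 + s) ^ 2) :=
            Real.log_le_log (by positivity) hsq
        _ = 2 * Real.log (1 + s) := by
            rw [Real.log_pow]; push_cast; ring
    have hl0 : 0 ≤ Real.log (1 + s) := Real.log_nonneg (by linarith)
    have h2 : s * Real.log (1 + s) ≤ (1 + s) * Real.log (1 + s) := by nlinarith
    unfold Afun
    nlinarith

lemma fact5 {s J : ℝ} (hs : 0 ≤ s) (hJ : 0 < J) :
    Real.log (Real.exp 1 + s / J) ≤
      Real.log (Real.exp 1 + s) + Real.log (Real.exp 1 + 1 / J) := by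
  have he : (1:ℝ) < Real.exp 1 := by have := Real.add_one_le_exp 1; linarith
  have hiJ : 0 < 1 / J := by positivity
  have hmul : Real.exp 1 + s / J ≤ (Real.exp 1 + s) * (Real.exp 1 + 1 / J) := by
    have hd : s / J = s * (1 / J) := by ring
    nlinarith
  calc Real.log (Real.exp 1 + s / J)
      ≤ Real.log ((Real.exp 1 + s) * (Real.exp 1 + 1 / J)) :=
        Real.log_le_log (by positivity) hmul
    _ = Real.log (Real.exp 1 + s) + Real.log (Real.exp 1 + 1 / J) :=
        Real.log_mul (by positivity) (by positivity)

lemma fact6 {J : ℝ} (hJ : 0 < J) : J * Real.log (Real.exp 1 + 1 / J) ≤ J + 1 := by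
  have he : (1:ℝ) < Real.exp 1 := by have := Real.add_one_le_exp 1; linarith
  have h1 : Real.exp 1 + 1 / J ≤ Real.exp 1 * (1 + 1 / J) := by
    have : 0 < 1 / J := by positivity
    nlinarith
  have h2 : Real.log (Real.exp 1 + 1 / J) ≤ 1 + Real.log (1 + 1 / J) := by
    calc Real.log (Real.exp 1 + 1 / J) ≤ Real.log (Real.exp 1 * (1 + 1 / J)) :=
          Real.log_le_log (by positivity) h1
      _ = 1 + Real.log (1 + 1 / J) := by
          rw [Real.log_mul (by positivity) (by positivity), Real.log_exp]
  have h3 : Real.log (1 + 1 / J) ≤ 1 / J := log_one_add_le (by positivity)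
  have h4 : Real.log (Real.exp 1 + 1 / J) ≤ 1 + 1 / J := by linarith
  calc J * Real.log (Real.exp 1 + 1 / J) ≤ J * (1 + 1 / J) := by nlinarith
    _ = J + 1 := by field_simp

set_option maxHeartbeats 1000000 in
theorem luxemburg_llogl_equivalence
    (d : ℕ) (Ω : Set (Ed d)) (hΩo : IsOpen Ω) (hΩb : Bornology.IsBounded Ω) :
    ∃ k₁ > (0 : ℝ), ∃ k₂ > (0 : ℝ), ∀ f : Ed d → ℝ,
      LocallyIntegrableOn f Ω →
      IntegrableOn
        (fun x => |f x| * Real.log (Real.exp 1 + |f x| / ∫ y in Ω, |f y|)) Ω →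
      (luxSet d Ω f).Nonempty →
      k₁ * luxNorm d Ω f ≤ llogl d Ω f ∧ llogl d Ω f ≤ k₂ * luxNorm d Ω f := by
  have hμ : volume Ω < ⊤ := hΩb.measure_lt_top
  obtain ⟨M, hM⟩ : ∃ M : ℝ, M = (volume Ω).toReal := ⟨_, rfl⟩
  have hM0 : 0 ≤ M := hM ▸ ENNReal.toReal_nonneg
  refine ⟨1, one_pos, 6 + 26 * M, by positivity, ?_⟩
  intro f hloc hint hne
  obtain ⟨I, hI⟩ : ∃ I : ℝ, I = ∫ y in Ω, |f y| := ⟨_, rfl⟩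
  have hmeas : AEStronglyMeasurable f (volume.restrict Ω) := hloc.aestronglyMeasurable
  have hI0 : 0 ≤ I := by
    rw [hI]; exact integral_nonneg fun y => abs_nonneg _
  obtain ⟨G, hGdef⟩ : ∃ G : Ed d → ℝ,
      G = fun x => |f x| * Real.log (Real.exp 1 + |f x| / I) := ⟨_, rfl⟩
  have hGint : IntegrableOn G Ω := by
    rw [hGdef, hI]; exact hint
  have hGpt : ∀ x, |f x| ≤ G x := by
    intro x
    have h1 : 1 ≤ Real.log (Real.exp 1 + |f x| / I) :=
      log_e_add_nonneg (div_nonneg (abs_nonneg _) hI0)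
    have h2 : 0 ≤ |f x| := abs_nonneg _
    rw [hGdef]
    nlinarith
  have habsmeas : AEStronglyMeasurable (fun x => |f x|) (volume.restrict Ω) := by
    simpa [Real.norm_eq_abs] using hmeas.norm
  have habs : IntegrableOn (fun x => |f x|) Ω := by
    refine hGint.mono' habsmeas (Filter.Eventually.of_forall fun x => ?_)
    rw [Real.norm_eq_abs, abs_abs]
    exact hGpt x
  have hll : llogl d Ω f = ∫ x in Ω, G x := by
    simp only [llogl, hGdef, ← hI]
  have hIG : I ≤ ∫ x in Ω, G x := by
    rw [hI]
    exact integral_mono habs hGint hGpt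
  rcases eq_or_lt_of_le hI0 with hIzero | hIpos
  · -- degenerate case: f = 0 a.e. on Ω
    have hf0 : (fun x => |f x|) =ᵐ[volume.restrict Ω] 0 := by
      refine (integral_eq_zero_iff_of_nonneg_ae
        (Filter.Eventually.of_forall fun x => abs_nonneg (f x)) habs).mp ?_
      rw [← hI]; exact hIzero.symm
    have hΦ0 : llogl d Ω f = 0 := by
      rw [hll]
      apply integral_eq_zero_of_ae
      filter_upwards [hf0] with x hx
      simp only [Pi.zero_apply] at hx
      simp [hGdef, hx]
    have hlux : luxSet d Ω f = Set.Ioi 0 := by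
      ext t
      simp only [luxSet, Set.mem_setOf_eq, Set.mem_Ioi]
      constructor
      · exact fun h => h.1
      · intro ht
        refine ⟨ht, ?_⟩
        have hz : (∫ x in Ω, Afun (|f x| / t)) = 0 := by
          apply integral_eq_zero_of_ae
          filter_upwards [hf0] with x hx
          simp only [Pi.zero_apply] at hx
          rw [hx]
          simp [Afun]
        rw [hz]
        norm_num
    have hln : luxNorm d Ω f = 0 := by
      rw [luxNorm, hlux, csInf_Ioi]
    rw [hln, hΦ0]
    norm_num
  · obtain ⟨Φ, hΦ⟩ : ∃ Φ : ℝ, Φ = llogl d Ω f := ⟨_, rfl⟩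
    have hll' : Φ = ∫ x in Ω, G x := by rw [hΦ, hll]
    have hΦI : I ≤ Φ := by rw [hll']; exact hIG
    have hΦpos : 0 < Φ := lt_of_lt_of_le hIpos hΦI
    constructor
    · -- lower bound : 1 * luxNorm ≤ llogl
      have hmem : Φ ∈ luxSet d Ω f := by
        refine ⟨hΦpos, ?_⟩
        have hpt : ∀ x, Afun (|f x| / Φ) ≤ Φ⁻¹ * G x := by
          intro x
          have hs0 : (0:ℝ) ≤ |f x| := abs_nonneg _
          have h1 : Afun (|f x| / Φ) ≤ (|f x| / Φ) * Real.log (1 + |f x| / Φ) :=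
            Afun_le (by positivity)
          have he : (1:ℝ) ≤ Real.exp 1 := by
            have := Real.add_one_le_exp 1; linarith
          have hdd : |f x| / Φ ≤ |f x| / I := by gcongr
          have h2 : Real.log (1 + |f x| / Φ) ≤ Real.log (Real.exp 1 + |f x| / I) := by
            apply Real.log_le_log (by positivity)
            linarith
          have h3 : (|f x| / Φ) * Real.log (1 + |f x| / Φ) ≤
              (|f x| / Φ) * Real.log (Real.exp 1 + |f x| / I) :=
            mul_le_mul_of_nonneg_left h2 (by positivity)
          have h4 : (|f x| / Φ) * Real.log (Real.exp 1 + |f x| / I) = Φ⁻¹ * G x := by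
            rw [hGdef]; ring
          linarith
        have h2 : (∫ x in Ω, Afun (|f x| / Φ)) ≤ ∫ x in Ω, Φ⁻¹ * G x :=
          integral_mono_of_nonneg
            (Filter.Eventually.of_forall fun x => Afun_nonneg (by positivity))
            (hGint.const_mul _) (Filter.Eventually.of_forall hpt)
        rw [integral_const_mul, ← hll', inv_mul_cancel₀ hΦpos.ne'] at h2
        exact h2
      have hlow : luxNorm d Ω f ≤ Φ :=
        csInf_le ⟨0, fun t ht => ht.1.le⟩ hmem
      rw [one_mul, ← hΦ]
      exact hlow
    · -- upper bound
      have key : ∀ t ∈ luxSet d Ω f, Φ ≤ (6 + 26 * M) * t := by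
        rintro t ⟨ht, hA1⟩
        obtain ⟨J, hJ⟩ : ∃ J : ℝ, J = I / t := ⟨_, rfl⟩
        have hJpos : 0 < J := hJ ▸ div_pos hIpos ht
        have he1 : (1:ℝ) ≤ Real.exp 1 := by
          have := Real.add_one_le_exp 1; linarith
        have hg1 : AEMeasurable (fun x => |f x| / t) (volume.restrict Ω) :=
          habsmeas.aemeasurable.div_const t
        have hAmeas : AEStronglyMeasurable (fun x => Afun (|f x| / t))
            (volume.restrict Ω) := by
          have hm : AEMeasurable (fun x => Afun (|f x| / t)) (volume.restrict Ω) := by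
            unfold Afun
            exact ((aemeasurable_const.add hg1).mul
              (Real.measurable_log.comp_aemeasurable (aemeasurable_const.add hg1))).sub hg1
          exact hm.aestronglyMeasurable
        obtain ⟨CI, hCI⟩ : ∃ CI : ℝ, CI = max 0 (Real.log I) := ⟨_, rfl⟩
        have hCI0 : 0 ≤ CI := hCI ▸ le_max_left _ _
        have hlogb : ∀ s : ℝ, 0 ≤ s →
            Real.log (1 + s) ≤ CI + Real.log (Real.exp 1 + s / I) := by
          intro s hs
          have hpos : (0:ℝ) < Real.exp 1 + s / I := by positivity
          rcases le_or_gt 1 I with hI1 | hI1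
          · have hb : 1 + s ≤ I * (Real.exp 1 + s / I) := by
              have hd : I * (s / I) = s := mul_div_cancel₀ s hIpos.ne'
              nlinarith
            have h5 := Real.log_le_log (by linarith : (0:ℝ) < 1 + s) hb
            rw [Real.log_mul hIpos.ne' hpos.ne'] at h5
            have h6 : Real.log I ≤ CI := hCI ▸ le_max_right _ _
            linarith
          · have hsle : s ≤ s / I := by
              rw [le_div_iff₀ hIpos]; nlinarith
            have hb : (1:ℝ) + s ≤ Real.exp 1 + s / I := by linarith
            have h5 := Real.log_le_log (by linarith : (0:ℝ) < 1 + s) hb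
            linarith
        have hAint : IntegrableOn (fun x => Afun (|f x| / t)) Ω := by
          refine Integrable.mono'
            (g := fun x => t⁻¹ * (Real.log (1 + 1 / t) + CI) * |f x| + t⁻¹ * G x)
            ((habs.const_mul _).add (hGint.const_mul _)) hAmeas
            (Filter.Eventually.of_forall fun x => ?_)
          have hs0 : (0:ℝ) ≤ |f x| := abs_nonneg _
          rw [Real.norm_eq_abs, abs_of_nonneg (Afun_nonneg (by positivity))]
          have h1 : Afun (|f x| / t) ≤ (|f x| / t) * Real.log (1 + |f x| / t) :=
            Afun_le (by positivity)
          have h2 : Real.log (1 + |f x| / t) ≤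
              Real.log (1 + 1 / t) + Real.log (1 + |f x|) := by
            have htinv : (0:ℝ) < 1 / t := by positivity
            have hmul : 1 + |f x| / t ≤ (1 + 1 / t) * (1 + |f x|) := by
              have hd : |f x| / t = |f x| * (1 / t) := by ring
              nlinarith
            calc Real.log (1 + |f x| / t) ≤ Real.log ((1 + 1 / t) * (1 + |f x|)) :=
                  Real.log_le_log (by positivity) hmul
              _ = _ := Real.log_mul (by positivity) (by positivity)
          have h3 := hlogb (|f x|) hs0
          have h4 : Real.log (1 + |f x| / t) ≤
              Real.log (1 + 1 / t) + CI + Real.log (Real.exp 1 + |f x| / I) := by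
            linarith
          have h5 : Afun (|f x| / t) ≤ (|f x| / t) *
              (Real.log (1 + 1 / t) + CI + Real.log (Real.exp 1 + |f x| / I)) :=
            le_trans h1 (mul_le_mul_of_nonneg_left h4 (by positivity))
          have h6 : (|f x| / t) *
              (Real.log (1 + 1 / t) + CI + Real.log (Real.exp 1 + |f x| / I)) =
              t⁻¹ * (Real.log (1 + 1 / t) + CI) * |f x| + t⁻¹ * G x := by
            rw [hGdef]; ring
          linarith
        have hconst8 : IntegrableOn (fun _ : Ed d => (8:ℝ)) Ω :=
          integrableOn_const hμ.ne
        have hconst2 : IntegrableOn (fun _ : Ed d => (2:ℝ)) Ω :=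
          integrableOn_const hμ.ne
        have hJle : J ≤ 1 + 8 * M := by
          have h1 : (∫ x in Ω, |f x| / t) ≤ ∫ x in Ω, (Afun (|f x| / t) + 8) :=
            integral_mono (habs.div_const t) (hAint.add hconst8)
              (fun x => le_Afun_add (by positivity))
          rw [integral_div, integral_add hAint hconst8, setIntegral_const,
            smul_eq_mul, measureReal_def, ← hI, ← hM] at h1
          rw [hJ]
          linarith
        obtain ⟨c, hc⟩ : ∃ c : ℝ, c = Real.log (Real.exp 1 + 1 / J) := ⟨_, rfl⟩
        have hc0 : 0 ≤ c := by
          have := log_e_add_nonneg (le_of_lt (by positivity : (0:ℝ) < 1 / J))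
          rw [hc]; linarith
        have hkey : ∀ x, G x ≤
            t * (2 * Afun (|f x| / t) + 2 * (|f x| / t) + 2) + |f x| * c := by
          intro x
          have hs0 : (0:ℝ) ≤ |f x| := abs_nonneg _
          have h0 : |f x| / I = (|f x| / t) / J := by
            rw [hJ]; field_simp
          have h2 : Real.log (Real.exp 1 + (|f x| / t) / J) ≤
              Real.log (Real.exp 1 + |f x| / t) + c := by
            rw [hc]; exact fact5 (by positivity) hJpos
          have h3 : (|f x| / t) * Real.log (Real.exp 1 + |f x| / t) ≤
              2 * Afun (|f x| / t) + 2 * (|f x| / t) + 2 := fact4 (by positivity)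
          have h4 : G x = |f x| * Real.log (Real.exp 1 + (|f x| / t) / J) := by
            simp only [hGdef]
            rw [h0]
          have h5 : |f x| * Real.log (Real.exp 1 + (|f x| / t) / J) ≤
              |f x| * (Real.log (Real.exp 1 + |f x| / t) + c) :=
            mul_le_mul_of_nonneg_left h2 hs0
          have h6 : |f x| * Real.log (Real.exp 1 + |f x| / t) =
              t * ((|f x| / t) * Real.log (Real.exp 1 + |f x| / t)) := by
            field_simp
          have h7 : t * ((|f x| / t) * Real.log (Real.exp 1 + |f x| / t)) ≤
              t * (2 * Afun (|f x| / t) + 2 * (|f x| / t) + 2) :=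
            mul_le_mul_of_nonneg_left h3 ht.le
          have h8 : |f x| * (Real.log (Real.exp 1 + |f x| / t) + c) =
              |f x| * Real.log (Real.exp 1 + |f x| / t) + |f x| * c := by ring
          linarith
        have ha2 : IntegrableOn (fun x => 2 * Afun (|f x| / t)) Ω :=
          hAint.const_mul 2
        have hb2 : IntegrableOn (fun x => 2 * (|f x| / t)) Ω :=
          (habs.div_const t).const_mul 2
        have hab : IntegrableOn (fun x => 2 * Afun (|f x| / t) + 2 * (|f x| / t)) Ω :=
          ha2.add hb2
        have hPint : IntegrableOn
            (fun x => 2 * Afun (|f x| / t) + 2 * (|f x| / t) + 2) Ω :=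
          hab.add hconst2
        have hPc : IntegrableOn
            (fun x => t * (2 * Afun (|f x| / t) + 2 * (|f x| / t) + 2)) Ω :=
          hPint.const_mul t
        have hfc : IntegrableOn (fun x => |f x| * c) Ω := habs.mul_const c
        have hbig : IntegrableOn (fun x =>
            t * (2 * Afun (|f x| / t) + 2 * (|f x| / t) + 2) + |f x| * c) Ω :=
          hPc.add hfc
        have hmono : Φ ≤ ∫ x in Ω,
            (t * (2 * Afun (|f x| / t) + 2 * (|f x| / t) + 2) + |f x| * c) := by
          rw [hll']
          exact integral_mono hGint hbig hkey
        have e5 : (∫ x in Ω, (2 * Afun (|f x| / t) + 2 * (|f x| / t) + 2))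
            = 2 * (∫ x in Ω, Afun (|f x| / t)) + 2 * J + 2 * M := by
          clear hmono hA1
          rw [integral_add hab hconst2, integral_add ha2 hb2,
            integral_const_mul, integral_const_mul, integral_div, setIntegral_const,
            smul_eq_mul, measureReal_def, ← hI, ← hM, ← hJ]
          ring
        have e6 : (∫ x in Ω,
            (t * (2 * Afun (|f x| / t) + 2 * (|f x| / t) + 2) + |f x| * c))
            = t * (2 * (∫ x in Ω, Afun (|f x| / t)) + 2 * J + 2 * M) + I * c := by
          clear hmono hA1
          rw [integral_add hPc hfc, integral_const_mul, integral_mul_const, e5, ← hI]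
        obtain ⟨X, hX⟩ : ∃ X : ℝ, X = ∫ x in Ω, Afun (|f x| / t) := ⟨_, rfl⟩
        rw [← hX] at hA1 e5 e6
        have hIeq : I = t * J := by
          rw [hJ]; field_simp
        have hiA0 : 0 ≤ X := by
          rw [hX]
          exact integral_nonneg fun x => Afun_nonneg (by positivity)
        have hJc : J * c ≤ J + 1 := by rw [hc]; exact fact6 hJpos
        have hfin : Φ ≤ t * (2 * X + 2 * J + 2 * M) + t * (J * c) := by
          rw [e6, hIeq, mul_assoc] at hmono
          exact hmono
        have m1 : t * X ≤ t * 1 :=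
          mul_le_mul_of_nonneg_left hA1 ht.le
        have m2 : t * J ≤ t * (1 + 8 * M) := mul_le_mul_of_nonneg_left hJle ht.le
        have m3 : t * (J * c) ≤ t * (J + 1) := mul_le_mul_of_nonneg_left hJc ht.le
        nlinarith [m1, m2, m3, hfin]
      have hk : (0:ℝ) < 6 + 26 * M := by positivity
      have h1 : Φ / (6 + 26 * M) ≤ luxNorm d Ω f := by
        apply le_csInf hne
        intro tt httmem
        rw [div_le_iff₀ hk, mul_comm]
        exact key tt httmem
      rw [div_le_iff₀ hk] at h1
      rw [← hΦ]
      linarith [h1]
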